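/- Let (C_n)_{n∈ℕ} be complex numbers with Σ_{n∈ℕ} |C_n| < +∞, let (μ_n)_{n∈ℕ} be complex numbers, and suppose there exist n₀ ∈ ℕ, θ ∈ ℝ and δ > 0 such that Re(e^{iθ} μ_n) ≤ Re(e^{iθ} μ_{n₀}) − δ for every n ≠ n₀. If Σ_{n∈ℕ} C_n e^{ρ e^{iθ} μ_n} = 0 for every ρ ≥ 0, then C_{n₀} = 0. -/

import Mathlib

/-- Let `(C_n)` be complex numbers with `Σ |C_n| < ∞`, let `(μ_n)` be
complex numbers, and suppose there are `n₀`, `θ` and `δ > 0` such that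
`Re(e^{iθ} μ_n) ≤ Re(e^{iθ} μ_{n₀}) − δ` for every `n ≠ n₀`.  If
`Σ_n C_n e^{ρ e^{iθ} μ_n} = 0` for every `ρ ≥ 0`, then `C_{n₀} = 0`. -/
theorem statement10 (C : ℕ → ℂ) (hC : Summable fun n : ℕ => ‖C n‖)
    (μ : ℕ → ℂ) (n₀ : ℕ) (θ : ℝ) (δ : ℝ) (hδ : 0 < δ)
    (hsep : ∀ n : ℕ, n ≠ n₀ →
      (Complex.exp (θ * Complex.I) * μ n).re
        ≤ (Complex.exp (θ * Complex.I) * μ n₀).re - δ)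
    (hzero : ∀ ρ : ℝ, 0 ≤ ρ →
      ∑' n : ℕ, C n * Complex.exp ((ρ : ℂ) * Complex.exp (θ * Complex.I) * μ n) = 0) :
    C n₀ = 0 := by
  set S : ℝ := ∑' n : ℕ, ‖C n‖ with hS
  set R : ℝ := (Complex.exp (θ * Complex.I) * μ n₀).re with hR
  -- norm of each term
  have hnorm : ∀ (ρ : ℝ) (n : ℕ),
      ‖C n * Complex.exp ((ρ : ℂ) * Complex.exp (θ * Complex.I) * μ n)‖
        = ‖C n‖ * Real.exp (ρ * (Complex.exp (θ * Complex.I) * μ n).re) := by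
    intro ρ n
    rw [norm_mul, Complex.norm_exp, mul_assoc,
      Complex.re_ofReal_mul]
  have hre_le : ∀ (n : ℕ), (Complex.exp (θ * Complex.I) * μ n).re ≤ R := by
    intro n
    by_cases h : n = n₀
    · subst h; exact le_of_eq hR.symm
    · linarith [hsep n h]
  have key : ∀ ρ : ℝ, 0 ≤ ρ → ‖C n₀‖ ≤ S * Real.exp (-(ρ * δ)) := by
    intro ρ hρ
    have hsum : Summable fun n : ℕ =>
        C n * Complex.exp ((ρ : ℂ) * Complex.exp (θ * Complex.I) * μ n) := by
      apply Summable.of_norm_bounded (g := fun n => ‖C n‖ * Real.exp (ρ * R))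
        (hC.mul_right _)
      intro n
      rw [hnorm]
      exact mul_le_mul_of_nonneg_left
        (Real.exp_le_exp.2 (mul_le_mul_of_nonneg_left (hre_le n) hρ)) (norm_nonneg _)
    have hsplit := Summable.tsum_eq_add_tsum_ite hsum n₀
    rw [hzero ρ hρ] at hsplit
    have heq : C n₀ * Complex.exp ((ρ : ℂ) * Complex.exp (θ * Complex.I) * μ n₀)
        = -∑' n : ℕ, (if n = n₀ then 0 else
            C n * Complex.exp ((ρ : ℂ) * Complex.exp (θ * Complex.I) * μ n)) := by
      linear_combination -hsplit
    -- bound the tail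
    have htail_bound : ∀ n : ℕ,
        ‖(if n = n₀ then 0 else
            C n * Complex.exp ((ρ : ℂ) * Complex.exp (θ * Complex.I) * μ n))‖
          ≤ ‖C n‖ * Real.exp (ρ * (R - δ)) := by
      intro n
      by_cases h : n = n₀
      · simp [h]
        positivity
      · simp only [h, if_neg, if_false]
        rw [hnorm]
        exact mul_le_mul_of_nonneg_left
          (Real.exp_le_exp.2 (mul_le_mul_of_nonneg_left
            (by linarith [hsep n h]) hρ)) (norm_nonneg _)
    have htail_summable : Summable fun n : ℕ =>
        ‖(if n = n₀ then 0 else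
            C n * Complex.exp ((ρ : ℂ) * Complex.exp (θ * Complex.I) * μ n))‖ :=
      Summable.of_nonneg_of_le (fun n => norm_nonneg _) htail_bound (hC.mul_right _)
    have h1 : ‖C n₀‖ * Real.exp (ρ * R) ≤ S * Real.exp (ρ * (R - δ)) := by
      calc ‖C n₀‖ * Real.exp (ρ * R)
          = ‖C n₀ * Complex.exp ((ρ : ℂ) * Complex.exp (θ * Complex.I) * μ n₀)‖ := by
            rw [hnorm]
        _ = ‖∑' n : ℕ, (if n = n₀ then 0 else
              C n * Complex.exp ((ρ : ℂ) * Complex.exp (θ * Complex.I) * μ n))‖ := by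
            rw [heq, norm_neg]
        _ ≤ ∑' n : ℕ, ‖(if n = n₀ then 0 else
              C n * Complex.exp ((ρ : ℂ) * Complex.exp (θ * Complex.I) * μ n))‖ :=
            norm_tsum_le_tsum_norm htail_summable
        _ ≤ ∑' n : ℕ, ‖C n‖ * Real.exp (ρ * (R - δ)) :=
            Summable.tsum_le_tsum htail_bound htail_summable (hC.mul_right _)
        _ = S * Real.exp (ρ * (R - δ)) := tsum_mul_right
    have hexp : Real.exp (ρ * (R - δ)) = Real.exp (ρ * R) * Real.exp (-(ρ * δ)) := by
      rw [← Real.exp_add]; ring_nf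
    rw [hexp, ← mul_assoc] at h1
    exact le_of_mul_le_mul_right (by linarith [h1]) (Real.exp_pos (ρ * R))
  -- take ρ → ∞ along naturals
  have htend : Filter.Tendsto (fun k : ℕ => S * Real.exp (-((k : ℝ) * δ))) Filter.atTop
      (nhds 0) := by
    have h1 : Filter.Tendsto (fun k : ℕ => (k : ℝ) * δ) Filter.atTop Filter.atTop :=
      tendsto_natCast_atTop_atTop.atTop_mul_const hδ
    have h2 := Real.tendsto_exp_neg_atTop_nhds_zero.comp h1
    simpa using h2.const_mul S
  have hle : ‖C n₀‖ ≤ 0 :=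
    ge_of_tendsto htend (Filter.Eventually.of_forall fun k => key k (Nat.cast_nonneg k))
  exact norm_le_zero_iff.1 hle
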